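/- Let p be an odd prime. For every integer k with 1 ≤ k ≤ p, the Stirling number of the second kind satisfies S(p-1+k, p) ≡ 1 (mod p) if k = 1 or k = p, and S(p-1+k, p) ≡ 0 (mod p) otherwise. -/

import Mathlib

set_option linter.unusedSectionVars false


open Polynomial Finset

/-- recursive Stirling numbers of the second kind -/
def S2 : ℕ → ℕ → ℕ
  | 0, 0 => 1
  | 0, _+1 => 0
  | _+1, 0 => 0
  | n+1, k+1 => (k+1) * S2 n (k+1) + S2 n k

@[simp] lemma S2_zero_zero : S2 0 0 = 1 := rfl
@[simp] lemma S2_zero_succ (k : ℕ) : S2 0 (k+1) = 0 := rfl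
@[simp] lemma S2_succ_zero (n : ℕ) : S2 (n+1) 0 = 0 := rfl
lemma S2_succ_succ (n k : ℕ) : S2 (n+1) (k+1) = (k+1) * S2 n (k+1) + S2 n k := rfl

lemma S2_eq_zero_of_lt : ∀ {n k : ℕ}, n < k → S2 n k = 0
  | 0, _+1, _ => rfl
  | n+1, k+1, h => by
    rw [S2_succ_succ, S2_eq_zero_of_lt (by omega), S2_eq_zero_of_lt (by omega)]
    simp

@[simp] lemma S2_self : ∀ n, S2 n n = 1
  | 0 => rfl
  | n+1 => by rw [S2_succ_succ, S2_eq_zero_of_lt (by omega), S2_self n]; simp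

/-- falling factorial polynomial -/
noncomputable def dfp (R : Type*) [CommRing R] (m : ℕ) : R[X] :=
  ∏ i ∈ Finset.range m, (X - C (i : R))

variable {R : Type*} [CommRing R]

@[simp] lemma dfp_zero : dfp R 0 = 1 := by simp [dfp]

lemma dfp_succ (m : ℕ) : dfp R (m+1) = dfp R m * (X - C (m : R)) := by
  simp [dfp, Finset.prod_range_succ]

lemma dfp_monic (m : ℕ) : (dfp R m).Monic := by
  apply monic_prod_of_monic; intro i _; exact monic_X_sub_C _

lemma dfp_natDegree [Nontrivial R] (m : ℕ) : (dfp R m).natDegree = m := by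
  induction m with
  | zero => simp
  | succ m ih =>
    rw [dfp_succ, Polynomial.Monic.natDegree_mul (dfp_monic m) (monic_X_sub_C _), ih,
      natDegree_X_sub_C]

/-- key identity: `X^n = ∑ S2 n m • (X)_m` -/
lemma dfp_coeff_self [Nontrivial R] (m : ℕ) : (dfp R m).coeff m = 1 := by
  have := (dfp_monic (R := R) m).coeff_natDegree
  rwa [dfp_natDegree] at this

lemma X_pow_eq_sum_S2 (n : ℕ) :
    (X : R[X]) ^ n = ∑ m ∈ Finset.range (n+1), C ((S2 n m : R)) * dfp R m := by
  induction n with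
  | zero => simp
  | succ n ih =>
    have key : ∀ m : ℕ, X * dfp R m = dfp R (m+1) + C (m : R) * dfp R m := by
      intro m; rw [dfp_succ]; ring
    calc (X : R[X]) ^ (n+1) = X * X ^ n := by ring
      _ = ∑ m ∈ Finset.range (n+1), C ((S2 n m : R)) * (X * dfp R m) := by
          rw [ih, Finset.mul_sum]; apply Finset.sum_congr rfl; intros; ring
      _ = ∑ m ∈ Finset.range (n+1), C ((S2 n m : R)) * dfp R (m+1)
          + ∑ m ∈ Finset.range (n+1), C ((m * S2 n m : ℕ) : R) * dfp R m := by
          rw [← Finset.sum_add_distrib]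
          apply Finset.sum_congr rfl; intro m _
          rw [key m, mul_add, Nat.cast_mul, C_mul]; ring
      _ = ∑ m ∈ Finset.range (n+2), C ((S2 (n+1) m : R)) * dfp R m := by
          rw [Finset.sum_range_succ' (fun m => C ((S2 (n+1) m : R)) * dfp R m) (n+1)]
          simp only [S2_succ_zero, Nat.cast_zero, map_zero, zero_mul, add_zero]
          rw [Finset.sum_range_succ' (fun m => C ((m * S2 n m : ℕ) : R) * dfp R m) n]
          simp only [Nat.cast_zero, zero_mul, Nat.cast_zero, map_zero, add_zero]
          have hterm : ∀ i ∈ Finset.range (n+1), C ((S2 (n+1) (i+1) : R)) * dfp R (i+1)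
              = C (((i+1) * S2 n (i+1) : ℕ) : R) * dfp R (i+1)
                + C ((S2 n i : R)) * dfp R (i+1) := by
            intro i _; rw [S2_succ_succ]; push_cast; rw [map_add]; ring
          rw [Finset.sum_congr rfl hterm, Finset.sum_add_distrib,
            Finset.sum_range_succ (fun i => C ((((i+1) * S2 n (i+1) : ℕ)) : R) * dfp R (i+1)) n,
            S2_eq_zero_of_lt (Nat.lt_succ_self n)]
          simp only [Nat.mul_zero, Nat.cast_zero, map_zero, zero_mul, add_zero]
          ring
      
/-- linear independence of the dfp family -/
lemma dfp_indep [Nontrivial R] : ∀ (N : ℕ) (c : ℕ → R),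
    (∑ m ∈ Finset.range N, C (c m) * dfp R m) = 0 → ∀ m < N, c m = 0 := by
  intro N
  induction N with
  | zero => intro c _ m hm; omega
  | succ N ih =>
    intro c h m hm
    have hcN : c N = 0 := by
      have := congrArg (fun q => Polynomial.coeff q N) h
      simp only [Polynomial.finset_sum_coeff, coeff_zero, coeff_C_mul] at this
      rw [Finset.sum_range_succ, dfp_coeff_self,
        Finset.sum_eq_zero (fun i hi => ?_)] at this
      · simpa using this
      · rw [coeff_eq_zero_of_natDegree_lt (by rw [dfp_natDegree]; exact Finset.mem_range.1 hi),
          mul_zero]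
    rcases Nat.lt_succ_iff_lt_or_eq.1 hm with h' | rfl
    · apply ih c _ m h'
      rw [Finset.sum_range_succ, hcN] at h; simpa using h
    · exact hcN

section ZModP

variable (p : ℕ) [Fact p.Prime]

lemma dfp_p_eq : dfp (ZMod p) p = X ^ p - X := by
  have hcard : Fintype.card (ZMod p) = p := ZMod.card p
  have hroots : (X ^ p - X : (ZMod p)[X]).roots = Finset.univ.val := by
    have := FiniteField.roots_X_pow_card_sub_X (ZMod p)
    rwa [hcard] at this
  have hdeg : (X ^ p - X : (ZMod p)[X]).natDegree = p :=
    FiniteField.X_pow_card_sub_X_natDegree_eq (ZMod p) (Fact.out : p.Prime).one_lt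
  have hmonic : (X ^ p - X : (ZMod p)[X]).Monic := by
    have : ((X : (ZMod p)[X]).degree < (X ^ p : (ZMod p)[X]).degree) := by
      rw [degree_X, degree_X_pow]
      exact_mod_cast (Fact.out : p.Prime).one_lt
    exact (monic_X_pow p).sub_of_left this
  have key := Polynomial.C_leadingCoeff_mul_prod_multiset_X_sub_C
    (p := (X ^ p - X : (ZMod p)[X])) (by rw [hroots, hdeg]; simp [hcard])
  rw [hmonic.leadingCoeff, map_one, one_mul, hroots] at key
  rw [← key, dfp]
  rw [← Finset.prod_eq_multiset_prod]
  refine Finset.prod_nbij' (fun i => (i : ZMod p)) (fun a => a.val) ?_ ?_ ?_ ?_ ?_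
  · intro i _; exact Finset.mem_univ _
  · intro a _
    exact Finset.mem_range.2 (ZMod.val_lt a)
  · intro i hi
    exact ZMod.val_cast_of_lt (Finset.mem_range.1 hi)
  · intro a _; exact ZMod.natCast_rightInverse a
  · intro i _; rfl

lemma dfp_p_add (j : ℕ) : dfp (ZMod p) (p + j) = dfp (ZMod p) p * dfp (ZMod p) j := by
  induction j with
  | zero => simp
  | succ j ih =>
    rw [← Nat.add_assoc, dfp_succ, ih, dfp_succ, mul_assoc]
    congr 3
    push_cast [ZMod.natCast_self]
    ring

lemma S2_key (k : ℕ) :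
    (S2 (p + k) p : ZMod p) = (S2 (k+1) p : ZMod p) + (S2 k 0 : ZMod p) := by
  have hp1 : 1 ≤ p := (Fact.out : p.Prime).one_le
  set c : ℕ → ZMod p := fun m =>
    (S2 (p + k) m : ZMod p) - (S2 (k+1) m : ZMod p)
      - (if p ≤ m then (S2 k (m - p) : ZMod p) else 0) with hc
  have hsum : (∑ m ∈ Finset.range (p + k + 1), C (c m) * dfp (ZMod p) m) = 0 := by
    have e1 : (∑ m ∈ Finset.range (p + k + 1), C ((S2 (p + k) m : ZMod p)) * dfp (ZMod p) m)
        = (X : (ZMod p)[X]) ^ (p + k) := (X_pow_eq_sum_S2 _).symm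
    have e2 : (∑ m ∈ Finset.range (p + k + 1), C ((S2 (k+1) m : ZMod p)) * dfp (ZMod p) m)
        = (X : (ZMod p)[X]) ^ (k + 1) := by
      rw [X_pow_eq_sum_S2 (R := ZMod p) (k+1)]
      apply (Finset.sum_subset (Finset.range_subset_range.2 (by omega)) ?_).symm
      intro m _ hm
      rw [S2_eq_zero_of_lt (by simp at hm ⊢; omega)]
      simp
    have e3 : (∑ m ∈ Finset.range (p + k + 1),
          C ((if p ≤ m then (S2 k (m - p) : ZMod p) else 0)) * dfp (ZMod p) m)
        = (X : (ZMod p)[X]) ^ k * dfp (ZMod p) p := by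
      have : p + k + 1 = p + (k + 1) := by omega
      rw [this, Finset.sum_range_add]
      have h1 : (∑ m ∈ Finset.range p,
          C ((if p ≤ m then (S2 k (m - p) : ZMod p) else 0)) * dfp (ZMod p) m) = 0 := by
        apply Finset.sum_eq_zero
        intro m hm
        rw [if_neg (by simp at hm; omega)]
        simp
      have h2 : ∀ i ∈ Finset.range (k+1),
          C ((if p ≤ p + i then (S2 k (p + i - p) : ZMod p) else 0)) * dfp (ZMod p) (p + i)
          = C ((S2 k i : ZMod p)) * (dfp (ZMod p) p * dfp (ZMod p) i) := by
        intro i _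
        rw [if_pos (by omega), Nat.add_sub_cancel_left, dfp_p_add]
      rw [h1, Finset.sum_congr rfl h2, zero_add]
      rw [X_pow_eq_sum_S2 (R := ZMod p) k, Finset.sum_mul]
      apply Finset.sum_congr rfl
      intros; ring
    have expand : ∀ m, C (c m) * dfp (ZMod p) m
        = C ((S2 (p + k) m : ZMod p)) * dfp (ZMod p) m
          - C ((S2 (k+1) m : ZMod p)) * dfp (ZMod p) m
          - C ((if p ≤ m then (S2 k (m - p) : ZMod p) else 0)) * dfp (ZMod p) m := by
      intro m
      rw [hc]
      simp only [map_sub]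
      ring
    rw [Finset.sum_congr rfl (fun m _ => expand m)]
    rw [Finset.sum_sub_distrib, Finset.sum_sub_distrib, e1, e2, e3]
    have hXp : (X : (ZMod p)[X]) ^ p = dfp (ZMod p) p + X := by
      rw [dfp_p_eq]; ring
    calc (X : (ZMod p)[X]) ^ (p + k) - X ^ (k+1) - X ^ k * dfp (ZMod p) p
        = X ^ k * (X ^ p) - X ^ (k+1) - X ^ k * dfp (ZMod p) p := by ring
      _ = 0 := by rw [hXp]; ring
  have := dfp_indep (p + k + 1) c hsum p (by omega)
  rw [hc] at this
  simp only [if_pos (le_refl p), Nat.sub_self] at this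
  linear_combination this

end ZModP

theorem S2_congr (p k : ℕ) (hp : p.Prime) (h1 : 1 ≤ k) (h2 : k ≤ p) :
    S2 (p - 1 + k) p ≡ (if k = 1 ∨ k = p then 1 else 0) [MOD p] := by
  haveI : Fact p.Prime := ⟨hp⟩
  obtain ⟨k', rfl⟩ : ∃ k', k = k' + 1 := ⟨k - 1, by omega⟩
  have hpk : p - 1 + (k' + 1) = p + k' := by have := hp.one_lt; omega
  rw [← ZMod.natCast_eq_natCast_iff, hpk, S2_key]
  rcases Nat.eq_zero_or_pos k' with rfl | hk'
  · rw [if_pos (Or.inl rfl), S2_eq_zero_of_lt hp.one_lt, S2_zero_zero]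
    simp
  · rcases eq_or_lt_of_le h2 with heq | hlt
    · rw [if_pos (Or.inr heq), heq, S2_self]
      obtain ⟨j, rfl⟩ : ∃ j, k' = j + 1 := ⟨k' - 1, by omega⟩
      rw [S2_succ_zero]
      simp
    · rw [if_neg (by omega), S2_eq_zero_of_lt hlt]
      obtain ⟨j, rfl⟩ : ∃ j, k' = j + 1 := ⟨k' - 1, by omega⟩
      rw [S2_succ_zero]
      simp

open Finset

namespace StirlingAux

variable {α : Type*} [DecidableEq α] [Fintype α] {a : α} {s : Finset α}

lemma not_mem_part_of_mem {P : Finpartition s} {t : Finset α} (ha : a ∉ s) (ht : t ∈ P.parts) :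
    a ∉ t := fun h => ha (P.le ht h)

/-- Insert `a` into the part `t` of a partition of `s`. -/
def insertPart (ha : a ∉ s) (P : Finpartition s) (t : Finset α) (ht : t ∈ P.parts) :
    Finpartition (insert a s) where
  parts := insert (insert a t) (P.parts.erase t)
  supIndep := by
    rw [Finset.supIndep_iff_pairwiseDisjoint, coe_insert]
    refine Set.PairwiseDisjoint.insert ?_ ?_
    · exact P.disjoint.subset (by simp [Finset.erase_subset])
    · intro u hu _
      simp only [Finset.coe_erase, Set.mem_diff, mem_coe, Set.mem_singleton_iff] at hu
      have : Disjoint (insert a t) u := by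
        rw [Finset.disjoint_insert_left]
        exact ⟨not_mem_part_of_mem ha hu.1,
          P.disjoint (Finset.mem_coe.2 ht) (Finset.mem_coe.2 hu.1) (fun h => hu.2 h.symm)⟩
      exact this
  sup_parts := by
    ext x
    simp only [Finset.mem_sup, Finset.mem_insert, id_eq]
    constructor
    · rintro ⟨v, hv | hv, hxv⟩
      · subst hv
        rcases Finset.mem_insert.1 hxv with rfl | hxt
        · exact Or.inl rfl
        · exact Or.inr (P.le ht hxt)
      · exact Or.inr (P.le (Finset.mem_of_mem_erase hv) hxv)
    · rintro (rfl | hxs)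
      · exact ⟨insert x t, Or.inl rfl, Finset.mem_insert_self x t⟩
      · obtain ⟨u, hu, hxu⟩ := P.exists_mem hxs
        rcases eq_or_ne u t with rfl | hne
        · exact ⟨insert a u, Or.inl rfl, Finset.mem_insert_of_mem hxu⟩
        · exact ⟨u, Or.inr (Finset.mem_erase.2 ⟨hne, hu⟩), hxu⟩
  bot_notMem := by
    simp only [Finset.bot_eq_empty, Finset.mem_insert, not_or]
    constructor
    · intro h; exact (Finset.insert_ne_empty a t) h.symm
    · exact fun h => P.bot_notMem (Finset.mem_of_mem_erase h)

lemma insertPart_parts (ha : a ∉ s) (P : Finpartition s) (t : Finset α) (ht : t ∈ P.parts) :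
    (insertPart ha P t ht).parts = insert (insert a t) (P.parts.erase t) := rfl

lemma insert_not_mem_erase (ha : a ∉ s) (P : Finpartition s) (t u : Finset α)
    (hu : u ∈ P.parts) : insert a t ∉ P.parts.erase u := by
  intro h
  exact not_mem_part_of_mem ha (Finset.mem_of_mem_erase h) (Finset.mem_insert_self a t)

lemma card_insertPart (ha : a ∉ s) (P : Finpartition s) (t : Finset α) (ht : t ∈ P.parts) :
    (insertPart ha P t ht).parts.card = P.parts.card := by
  rw [insertPart_parts, Finset.card_insert_of_notMem (insert_not_mem_erase ha P t t ht),
    Finset.card_erase_of_mem ht]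
  have : 0 < P.parts.card := Finset.card_pos.2 ⟨t, ht⟩
  omega

lemma part_insertPart (ha : a ∉ s) (P : Finpartition s) (t : Finset α) (ht : t ∈ P.parts) :
    (insertPart ha P t ht).part a = insert a t :=
  Finpartition.part_eq_of_mem _ (Finset.mem_insert_self _ _) (Finset.mem_insert_self a t)

/-- Extend a partition of `s` by the singleton part `{a}`. -/
def extendPart (ha : a ∉ s) (P : Finpartition s) : Finpartition (insert a s) :=
  P.extend (by simp [Finset.bot_eq_empty]) (Finset.disjoint_singleton_right.2 ha)
    (by rw [Finset.sup_eq_union, Finset.union_comm, ← Finset.insert_eq])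

lemma extendPart_parts (ha : a ∉ s) (P : Finpartition s) :
    (extendPart ha P).parts = insert {a} P.parts := rfl

lemma card_extendPart (ha : a ∉ s) (P : Finpartition s) :
    (extendPart ha P).parts.card = P.parts.card + 1 := by
  rw [extendPart_parts, Finset.card_insert_of_notMem]
  intro h
  exact not_mem_part_of_mem ha h (Finset.mem_singleton_self a)

lemma part_extendPart (ha : a ∉ s) (P : Finpartition s) :
    (extendPart ha P).part a = {a} :=
  Finpartition.part_eq_of_mem _ (Finset.mem_insert_self _ _) (Finset.mem_singleton_self a)

/-- Restrict a partition of `insert a s` to `s` by deleting `a`. -/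
def restrictPart (ha : a ∉ s) (P' : Finpartition (insert a s)) : Finpartition s :=
  (P'.avoid {a}).copy (by rw [Finset.sdiff_singleton_eq_erase, Finset.erase_insert ha])

lemma mem_restrictPart (ha : a ∉ s) (P' : Finpartition (insert a s)) (u : Finset α) :
    u ∈ (restrictPart ha P').parts ↔ ∃ d ∈ P'.parts, ¬d ⊆ {a} ∧ d \ {a} = u := by
  rw [restrictPart, Finpartition.copy_parts, Finpartition.mem_avoid]

lemma part_a_mem (P' : Finpartition (insert a s)) : P'.part a ∈ P'.parts :=
  P'.part_mem.2 (Finset.mem_insert_self a s)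

lemma a_mem_part_a (P' : Finpartition (insert a s)) : a ∈ P'.part a :=
  P'.mem_part (Finset.mem_insert_self a s)

lemma eq_part_of_mem (P' : Finpartition (insert a s)) {d : Finset α}
    (hd : d ∈ P'.parts) (had : a ∈ d) : d = P'.part a :=
  P'.eq_of_mem_parts hd (part_a_mem P') had (a_mem_part_a P')

lemma not_mem_of_ne_part (P' : Finpartition (insert a s)) {d : Finset α}
    (hd : d ∈ P'.parts) (hne : d ≠ P'.part a) : a ∉ d :=
  fun h => hne (eq_part_of_mem P' hd h)

lemma not_subset_singleton (P' : Finpartition (insert a s)) {d : Finset α}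
    (hd : d ∈ P'.parts) (hne : d ≠ {a}) : ¬d ⊆ {a} := by
  intro h
  rcases Finset.subset_singleton_iff.1 h with rfl | rfl
  · exact P'.bot_notMem hd
  · exact hne rfl

/-- Parts of the restriction, singleton case. -/
lemma restrictPart_parts_of_singleton (ha : a ∉ s) (P' : Finpartition (insert a s))
    (h : P'.part a = {a}) : (restrictPart ha P').parts = P'.parts.erase {a} := by
  ext u
  rw [mem_restrictPart]
  constructor
  · rintro ⟨d, hd, hds, rfl⟩
    have hda : d ≠ {a} := fun he => hds (he ▸ Finset.Subset.refl _)
    have had : a ∉ d := not_mem_of_ne_part P' hd (h ▸ hda)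
    rw [Finset.sdiff_singleton_eq_erase, Finset.erase_eq_of_notMem had]
    exact Finset.mem_erase.2 ⟨hda, hd⟩
  · intro hu
    rcases Finset.mem_erase.1 hu with ⟨hne, hu'⟩
    have had : a ∉ u := not_mem_of_ne_part P' hu' (h ▸ hne)
    exact ⟨u, hu', not_subset_singleton P' hu' hne,
      by rw [Finset.sdiff_singleton_eq_erase, Finset.erase_eq_of_notMem had]⟩

/-- Parts of the restriction, non-singleton case. -/
lemma restrictPart_parts_of_ne (ha : a ∉ s) (P' : Finpartition (insert a s))
    (h : P'.part a ≠ {a}) :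
    (restrictPart ha P').parts
      = insert ((P'.part a).erase a) (P'.parts.erase (P'.part a)) := by
  ext u
  rw [mem_restrictPart]
  constructor
  · rintro ⟨d, hd, hds, rfl⟩
    rcases eq_or_ne d (P'.part a) with rfl | hne
    · rw [Finset.sdiff_singleton_eq_erase]
      exact Finset.mem_insert_self _ _
    · have had : a ∉ d := not_mem_of_ne_part P' hd hne
      rw [Finset.sdiff_singleton_eq_erase, Finset.erase_eq_of_notMem had]
      exact Finset.mem_insert_of_mem (Finset.mem_erase.2 ⟨hne, hd⟩)
  · intro hu
    rcases Finset.mem_insert.1 hu with rfl | hu'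
    · exact ⟨P'.part a, part_a_mem P', not_subset_singleton P' (part_a_mem P') h,
        Finset.sdiff_singleton_eq_erase a _⟩
    · rcases Finset.mem_erase.1 hu' with ⟨hne, hu''⟩
      have had : a ∉ u := not_mem_of_ne_part P' hu'' hne
      exact ⟨u, hu'', not_subset_singleton P' hu''
        (fun he => had (he ▸ Finset.mem_singleton_self a)),
        by rw [Finset.sdiff_singleton_eq_erase, Finset.erase_eq_of_notMem had]⟩

lemma restrict_extendPart (ha : a ∉ s) (P : Finpartition s) :
    restrictPart ha (extendPart ha P) = P := by
  ext1
  rw [restrictPart_parts_of_singleton ha _ (part_extendPart ha P), extendPart_parts,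
    Finset.erase_insert]
  intro h
  exact not_mem_part_of_mem ha h (Finset.mem_singleton_self a)

lemma restrict_insertPart (ha : a ∉ s) (P : Finpartition s) (t : Finset α) (ht : t ∈ P.parts) :
    restrictPart ha (insertPart ha P t ht) = P := by
  have hsing : (insertPart ha P t ht).part a ≠ {a} := by
    rw [part_insertPart]
    intro h
    obtain ⟨x, hx⟩ := P.nonempty_of_mem_parts ht
    have hxa : x ≠ a := fun he => not_mem_part_of_mem ha ht (he ▸ hx)
    have : x ∈ ({a} : Finset α) := h ▸ Finset.mem_insert_of_mem hx
    exact hxa (Finset.mem_singleton.1 this)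
  ext1
  rw [restrictPart_parts_of_ne ha _ hsing, part_insertPart,
    Finset.erase_insert (not_mem_part_of_mem ha ht), insertPart_parts,
    Finset.erase_insert (insert_not_mem_erase ha P t t ht), Finset.insert_erase ht]

lemma erase_part_mem_restrict (ha : a ∉ s) (P' : Finpartition (insert a s))
    (h : P'.part a ≠ {a}) : (P'.part a).erase a ∈ (restrictPart ha P').parts := by
  rw [restrictPart_parts_of_ne ha P' h]
  exact Finset.mem_insert_self _ _

lemma extend_restrict (ha : a ∉ s) (P' : Finpartition (insert a s))
    (h : P'.part a = {a}) : extendPart ha (restrictPart ha P') = P' := by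
  ext1
  rw [extendPart_parts, restrictPart_parts_of_singleton ha P' h,
    Finset.insert_erase (h ▸ part_a_mem P')]

lemma erase_part_not_mem (P' : Finpartition (insert a s)) :
    (P'.part a).erase a ∉ P'.parts.erase (P'.part a) := by
  intro hmem
  obtain ⟨hne, hmem'⟩ := Finset.mem_erase.1 hmem
  obtain ⟨x, hx⟩ := P'.nonempty_of_mem_parts hmem'
  have hx2 : x ∈ P'.part a := Finset.mem_of_mem_erase hx
  have hdisj := P'.disjoint (Finset.mem_coe.2 hmem') (Finset.mem_coe.2 (part_a_mem P')) hne
  exact Finset.disjoint_left.1 hdisj hx hx2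

lemma insert_restrict (ha : a ∉ s) (P' : Finpartition (insert a s))
    (h : P'.part a ≠ {a}) :
    insertPart ha (restrictPart ha P') ((P'.part a).erase a)
      (erase_part_mem_restrict ha P' h) = P' := by
  ext1
  rw [insertPart_parts, restrictPart_parts_of_ne ha P' h,
    Finset.insert_erase (a_mem_part_a P'),
    Finset.erase_insert (erase_part_not_mem P'), Finset.insert_erase (part_a_mem P')]

lemma card_restrict_singleton (ha : a ∉ s) (P' : Finpartition (insert a s))
    (h : P'.part a = {a}) :
    (restrictPart ha P').parts.card + 1 = P'.parts.card := by
  rw [restrictPart_parts_of_singleton ha P' h,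
    Finset.card_erase_of_mem (h ▸ part_a_mem P')]
  have : 0 < P'.parts.card := Finset.card_pos.2 ⟨_, part_a_mem P'⟩
  omega

lemma card_restrict_ne (ha : a ∉ s) (P' : Finpartition (insert a s))
    (h : P'.part a ≠ {a}) :
    (restrictPart ha P').parts.card = P'.parts.card := by
  rw [restrictPart_parts_of_ne ha P' h,
    Finset.card_insert_of_notMem (erase_part_not_mem P'),
    Finset.card_erase_of_mem (part_a_mem P')]
  have : 0 < P'.parts.card := Finset.card_pos.2 ⟨_, part_a_mem P'⟩
  omega

lemma part_insertPart_ne (ha : a ∉ s) (P : Finpartition s) (t : Finset α) (ht : t ∈ P.parts) :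
    (insertPart ha P t ht).part a ≠ {a} := by
  rw [part_insertPart]
  intro h
  obtain ⟨x, hx⟩ := P.nonempty_of_mem_parts ht
  have : x ∈ ({a} : Finset α) := h ▸ Finset.mem_insert_of_mem hx
  exact not_mem_part_of_mem ha ht ((Finset.mem_singleton.1 this) ▸ hx)

/-- Partitions of `insert a s` where `a` is a singleton part correspond to partitions of `s`. -/
def equivSingleton (ha : a ∉ s) (k : ℕ) :
    {P' : Finpartition (insert a s) // P'.parts.card = k + 1 ∧ P'.part a = {a}}
      ≃ {P : Finpartition s // P.parts.card = k} where
  toFun P' := ⟨restrictPart ha P'.1, by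
    have := card_restrict_singleton ha P'.1 P'.2.2
    omega⟩
  invFun P := ⟨extendPart ha P.1, by rw [card_extendPart, P.2], part_extendPart ha P.1⟩
  left_inv P' := Subtype.ext (extend_restrict ha P'.1 P'.2.2)
  right_inv P := Subtype.ext (restrict_extendPart ha P.1)

/-- Partitions of `insert a s` where `a` is in a non-singleton part correspond to
pairs of a partition of `s` together with a chosen part. -/
def equivNe (ha : a ∉ s) (k : ℕ) :
    {P' : Finpartition (insert a s) // P'.parts.card = k ∧ P'.part a ≠ {a}}
      ≃ {q : Finpartition s × Finset α // q.1.parts.card = k ∧ q.2 ∈ q.1.parts} where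
  toFun P' := ⟨(restrictPart ha P'.1, (P'.1.part a).erase a),
    by rw [card_restrict_ne ha P'.1 P'.2.2]; exact P'.2.1,
    erase_part_mem_restrict ha P'.1 P'.2.2⟩
  invFun q := ⟨insertPart ha q.1.1 q.1.2 q.2.2,
    by rw [card_insertPart]; exact q.2.1,
    part_insertPart_ne ha q.1.1 q.1.2 q.2.2⟩
  left_inv P' := Subtype.ext (insert_restrict ha P'.1 P'.2.2)
  right_inv q := Subtype.ext (Prod.ext (restrict_insertPart ha q.1.1 q.1.2 q.2.2)
    (by
      show ((insertPart ha q.1.1 q.1.2 q.2.2).part a).erase a = q.1.2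
      rw [part_insertPart, Finset.erase_insert (not_mem_part_of_mem ha q.2.2)]))

lemma card_split (ha : a ∉ s) (k : ℕ) :
    Nat.card {P' : Finpartition (insert a s) // P'.parts.card = k}
      = Nat.card {P' : Finpartition (insert a s) // P'.parts.card = k ∧ P'.part a = {a}}
        + Nat.card {P' : Finpartition (insert a s) // P'.parts.card = k ∧ P'.part a ≠ {a}} := by
  classical
  rw [← Nat.card_sum]
  apply Nat.card_congr
  exact ((Equiv.sumCongr
    (Equiv.subtypeSubtypeEquivSubtypeInter (fun P' : Finpartition (insert a s) => P'.parts.card = k)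
      (fun P' => P'.part a = {a})).symm
    (Equiv.subtypeSubtypeEquivSubtypeInter (fun P' : Finpartition (insert a s) => P'.parts.card = k)
      (fun P' => ¬P'.part a = {a})).symm).trans
    (Equiv.sumCompl (fun y : {P' : Finpartition (insert a s) // P'.parts.card = k} =>
      y.1.part a = {a}))).symm

lemma card_pairs (s : Finset α) (k : ℕ) :
    Nat.card {q : Finpartition s × Finset α // q.1.parts.card = k ∧ q.2 ∈ q.1.parts}
      = k * Nat.card {P : Finpartition s // P.parts.card = k} := by
  classical
  rw [Nat.card_eq_fintype_card, Nat.card_eq_fintype_card, Fintype.card_subtype,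
    Fintype.card_subtype]
  rw [Finset.card_eq_sum_card_fiberwise (f := fun q => q.1)
    (t := Finset.univ.filter fun P : Finpartition s => P.parts.card = k)
    (fun q hq => by
      simp only [Finset.mem_coe, Finset.mem_filter, Finset.mem_univ, true_and] at hq ⊢
      exact hq.1)]
  have hsum : ∀ P ∈ Finset.univ.filter fun P : Finpartition s => P.parts.card = k,
      (Finset.filter (fun q : Finpartition s × Finset α => q.1 = P)
        (Finset.univ.filter fun q : Finpartition s × Finset α =>
          q.1.parts.card = k ∧ q.2 ∈ q.1.parts)).card = k := by
    intro P hP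
    have hPk : P.parts.card = k := (Finset.mem_filter.1 hP).2
    have hset : Finset.filter (fun q : Finpartition s × Finset α => q.1 = P)
        (Finset.univ.filter fun q : Finpartition s × Finset α =>
          q.1.parts.card = k ∧ q.2 ∈ q.1.parts)
        = P.parts.map ⟨fun u => (P, u), fun u v h => congrArg Prod.snd h⟩ := by
      ext q
      simp only [Finset.mem_filter, Finset.mem_univ, true_and, Finset.mem_map,
        Function.Embedding.coeFn_mk]
      constructor
      · rintro ⟨⟨hk, hmem⟩, rfl⟩
        exact ⟨q.2, hmem, rfl⟩
      · rintro ⟨u, hu, rfl⟩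
        exact ⟨⟨hPk, hu⟩, rfl⟩
    rw [hset, Finset.card_map, hPk]
  rw [Finset.sum_congr rfl hsum, Finset.sum_const, smul_eq_mul, mul_comm]

lemma card_zero_insert (ha : a ∉ s) :
    Nat.card {P' : Finpartition (insert a s) // P'.parts.card = 0} = 0 := by
  have : IsEmpty {P' : Finpartition (insert a s) // P'.parts.card = 0} := by
    constructor
    rintro ⟨P', hP'⟩
    have hne : (insert a s : Finset α) ≠ ⊥ := by
      rw [Finset.bot_eq_empty]
      exact Finset.insert_ne_empty a s
    have := P'.parts_nonempty hne
    rw [Finset.card_eq_zero] at hP'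
    rw [hP'] at this
    exact Finset.not_nonempty_empty this
  exact Nat.card_of_isEmpty

lemma card_step (ha : a ∉ s) (k : ℕ) :
    Nat.card {P' : Finpartition (insert a s) // P'.parts.card = k + 1}
      = (k + 1) * Nat.card {P : Finpartition s // P.parts.card = k + 1}
        + Nat.card {P : Finpartition s // P.parts.card = k} := by
  rw [card_split ha (k + 1), Nat.card_congr (equivSingleton ha k),
    Nat.card_congr (equivNe ha (k + 1)), card_pairs, Nat.add_comm]

lemma card_empty_partition (k : ℕ) :
    Nat.card {P : Finpartition (∅ : Finset α) // P.parts.card = k}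
      = if k = 0 then 1 else 0 := by
  have hparts : ∀ P : Finpartition (∅ : Finset α), P.parts = ∅ := fun P =>
    Finpartition.parts_eq_empty_iff.2 Finset.bot_eq_empty.symm
  rcases k with _ | k
  · rw [if_pos rfl]
    haveI : Unique {P : Finpartition (∅ : Finset α) // P.parts.card = 0} :=
      { default := ⟨(Finpartition.empty (Finset α)).copy Finset.bot_eq_empty,
          by rw [Finpartition.copy_parts]; rfl⟩
        uniq := fun x => Subtype.ext (Finpartition.ext (by rw [hparts, hparts])) }
    exact Nat.card_unique
  · rw [if_neg (Nat.succ_ne_zero k)]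
    haveI : IsEmpty {P : Finpartition (∅ : Finset α) // P.parts.card = k + 1} := by
      constructor
      rintro ⟨P, hP⟩
      rw [hparts P] at hP
      simp at hP
    exact Nat.card_of_isEmpty

end StirlingAux

namespace StirlingAux

lemma card_eq_S2 {α : Type*} [DecidableEq α] [Fintype α] (s : Finset α) :
    ∀ k, Nat.card {P : Finpartition s // P.parts.card = k} = S2 s.card k := by
  induction s using Finset.induction_on with
  | empty =>
    intro k
    rw [card_empty_partition, Finset.card_empty]
    rcases k with _ | k
    · simp
    · simp
  | insert _ _ ha ih =>
    intro k
    rw [Finset.card_insert_of_notMem ha]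
    rcases k with _ | k
    · rw [card_zero_insert ha, S2_succ_zero]
    · rw [card_step ha k, ih, ih, S2_succ_succ]

end StirlingAux

/-- Stirling number of the second kind: number of partitions of an `n`-set
into `k` nonempty blocks. -/
noncomputable def stirling (n k : ℕ) : ℕ :=
  Nat.card {P : Finpartition (Finset.univ : Finset (Fin n)) // P.parts.card = k}

lemma stirling_eq_S2 (n k : ℕ) : stirling n k = S2 n k := by
  have := StirlingAux.card_eq_S2 (Finset.univ : Finset (Fin n)) k
  rwa [Finset.card_univ, Fintype.card_fin] at this

theorem stmt_4 (p k : ℕ) (hp : p.Prime) (hodd : Odd p) (h1 : 1 ≤ k) (h2 : k ≤ p) :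
    stirling (p - 1 + k) p ≡ (if k = 1 ∨ k = p then 1 else 0) [MOD p] := by
  rw [stirling_eq_S2]
  exact S2_congr p k hp h1 h2
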